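/- Let U and Û be q×r real matrices with orthonormal columns, and let U diag(φ_1,…,φ_r) Ûᵀ (with φ_1 ≥ ⋯ ≥ φ_r ≥ 0) be such that U Uᵀ = P, Û Ûᵀ = P̂ are the associated projections and each pair (U e_j, Û e_j) spans an invariant subspace of P − P̂ with (U e_j)ᵀ(Û e_j) = φ_j. Then ‖U − Û‖_op² = 2(1 − φ_r) ≤ 2(1 − √(1 − ‖P − P̂‖_op²)), provided ‖P − P̂‖_op < 1. -/

import Mathlib

open Matrix
open scoped Matrix.Norms.L2Operator

-- upper bound helper
lemma aux_opNorm_le {m n : ℕ} (A : Matrix (Fin m) (Fin n) ℝ) {c : ℝ} (hc : 0 ≤ c)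
    (h : ∀ x : Fin n → ℝ, ∑ i, ((A *ᵥ x) i) ^ 2 ≤ c ^ 2 * ∑ j, (x j) ^ 2) : ‖A‖ ≤ c := by
  rw [Matrix.l2_opNorm_def]
  refine ContinuousLinearMap.opNorm_le_bound _ hc fun x => ?_
  set y : Fin n → ℝ := (WithLp.equiv 2 (Fin n → ℝ)) x with hy
  have hfx : ((Matrix.toEuclideanLin.trans LinearMap.toContinuousLinearMap) A) x
      = (WithLp.equiv 2 (Fin m → ℝ)).symm (A *ᵥ y) := rfl
  rw [hfx]
  have h1 : ‖(WithLp.equiv 2 (Fin m → ℝ)).symm (A *ᵥ y)‖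
      = Real.sqrt (∑ i, ((A *ᵥ y) i) ^ 2) := by
    rw [EuclideanSpace.norm_eq]
    congr 1
    exact Finset.sum_congr rfl fun i _ => by rw [Real.norm_eq_abs, sq_abs]; rfl
  have h2 : ‖x‖ = Real.sqrt (∑ j, (y j) ^ 2) := by
    rw [EuclideanSpace.norm_eq]
    congr 1
    exact Finset.sum_congr rfl fun j _ => by rw [Real.norm_eq_abs, sq_abs]; rfl
  rw [h1, h2]
  calc Real.sqrt (∑ i, ((A *ᵥ y) i) ^ 2) ≤ Real.sqrt (c ^ 2 * ∑ j, (y j) ^ 2) :=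
        Real.sqrt_le_sqrt (h y)
    _ = c * Real.sqrt (∑ j, (y j) ^ 2) := by
        rw [Real.sqrt_mul (sq_nonneg c), Real.sqrt_sq hc]

-- lower bound helper
lemma aux_le_opNorm {m n : ℕ} (A : Matrix (Fin m) (Fin n) ℝ) (x : Fin n → ℝ)
    (hx : ∑ j, (x j) ^ 2 = 1) :
    Real.sqrt (∑ i, ((A *ᵥ x) i) ^ 2) ≤ ‖A‖ := by
  have h := Matrix.l2_opNorm_mulVec A ((WithLp.equiv 2 (Fin n → ℝ)).symm x)
  have h1 : ‖(EuclideanSpace.equiv (Fin m) ℝ).symm (A *ᵥ (WithLp.equiv 2 (Fin n → ℝ)).symm x)‖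
      = Real.sqrt (∑ i, ((A *ᵥ x) i) ^ 2) := by
    rw [EuclideanSpace.norm_eq]
    congr 1
    exact Finset.sum_congr rfl fun i _ => by rw [Real.norm_eq_abs, sq_abs]; rfl
  have h2 : ‖(WithLp.equiv 2 (Fin n → ℝ)).symm x‖ = 1 := by
    rw [EuclideanSpace.norm_eq]
    rw [show ∑ j, ‖(WithLp.equiv 2 (Fin n → ℝ)).symm x j‖ ^ 2 = ∑ j, (x j) ^ 2 from
      Finset.sum_congr rfl fun j _ => by rw [Real.norm_eq_abs, sq_abs]; rfl, hx, Real.sqrt_one]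
  rw [h1, h2, mul_one] at h
  exact h

-- exact norm of a diagonal matrix achieving its max at j0
lemma aux_diag_norm {r : ℕ} (d : Fin r → ℝ) (j0 : Fin r) (hd0 : ∀ j, 0 ≤ d j)
    (hdc : ∀ j, d j ≤ d j0) :
    ‖(Matrix.diagonal d : Matrix (Fin r) (Fin r) ℝ)‖ = d j0 := by
  refine le_antisymm ?_ ?_
  · refine aux_opNorm_le _ (hd0 j0) fun x => ?_
    rw [Finset.mul_sum]
    refine Finset.sum_le_sum fun i _ => ?_
    rw [Matrix.mulVec_diagonal, mul_pow]
    have : d i ^ 2 ≤ d j0 ^ 2 := by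
      have := hd0 i; have := hdc i; nlinarith
    nlinarith [sq_nonneg (x i)]
  · have h := aux_le_opNorm (Matrix.diagonal d) (Pi.single j0 1) ?_
    · have hv : ∑ i, ((Matrix.diagonal d *ᵥ Pi.single j0 1) i) ^ 2 = d j0 ^ 2 := by
        rw [Finset.sum_eq_single j0]
        · simp [Matrix.mulVec_diagonal]
        · intro i _ hi
          simp [Matrix.mulVec_diagonal, Pi.single_apply, hi]
        · simp
      rwa [hv, Real.sqrt_sq (hd0 j0)] at h
    · rw [Finset.sum_eq_single j0] <;> simp +contextual [Pi.single_apply]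

/-- If `U`, `Û` have orthonormal columns, `P = UUᵀ`, `P̂ = ÛÛᵀ`, and
`U diag(φ₁,…,φ_r) Ûᵀ` (with `φ₁ ≥ ⋯ ≥ φ_r ≥ 0`) gives `P P̂` while each pair
`(U e_j, Û e_j)` spans an invariant subspace of `P − P̂` with `(Ue_j)ᵀ(Ûe_j) = φ_j`,
then `‖U − Û‖_op² = 2(1 − φ_r) ≤ 2(1 − √(1 − ‖P − P̂‖_op²))` provided `‖P − P̂‖_op < 1`. -/
theorem opNorm_sq_diff_orthonormal_frames (q r : ℕ) (hr : 0 < r)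
    (U Uhat : Matrix (Fin q) (Fin r) ℝ)
    (hU : Uᵀ * U = 1) (hUhat : Uhatᵀ * Uhat = 1)
    (φ : Fin r → ℝ) (hφa : Antitone φ) (hφ0 : ∀ j, 0 ≤ φ j) (hφ1 : ∀ j, φ j ≤ 1)
    (P Phat : Matrix (Fin q) (Fin q) ℝ)
    (hP : P = U * Uᵀ) (hPhat : Phat = Uhat * Uhatᵀ)
    (hsvd : P * Phat = U * Matrix.diagonal φ * Uhatᵀ)
    (hφdef : ∀ j, (fun i => U i j) ⬝ᵥ (fun i => Uhat i j) = φ j)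
    (hinv : ∀ j, ∀ v ∈ Submodule.span ℝ ({fun i => U i j, fun i => Uhat i j} :
        Set (Fin q → ℝ)),
      (P - Phat).mulVec v ∈ Submodule.span ℝ ({fun i => U i j, fun i => Uhat i j} :
        Set (Fin q → ℝ)))
    (hop : ‖P - Phat‖ < 1) :
    ‖U - Uhat‖ ^ 2 = 2 * (1 - φ ⟨r - 1, by omega⟩) ∧
    ‖U - Uhat‖ ^ 2 ≤ 2 * (1 - Real.sqrt (1 - ‖P - Phat‖ ^ 2)) := by
  set jr : Fin r := ⟨r - 1, by omega⟩ with hjr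
  -- Step 1: Uᵀ Uhat = diagonal φ
  have hU' : ∀ X : Matrix (Fin r) (Fin r) ℝ, Uᵀ * (U * X) = X := fun X => by
    rw [← Matrix.mul_assoc, hU, one_mul]
  have hD : Uᵀ * Uhat = Matrix.diagonal φ := by
    calc Uᵀ * Uhat = (Uᵀ * U) * (Uᵀ * Uhat) * (Uhatᵀ * Uhat) := by
          rw [hU, hUhat, one_mul, mul_one]
      _ = Uᵀ * (P * Phat) * Uhat := by rw [hP, hPhat]; simp only [Matrix.mul_assoc]
      _ = Uᵀ * (U * Matrix.diagonal φ * Uhatᵀ) * Uhat := by rw [hsvd]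
      _ = Matrix.diagonal φ * (Uhatᵀ * Uhat) := by
          simp only [Matrix.mul_assoc]; rw [hU']
      _ = Matrix.diagonal φ := by rw [hUhat, mul_one]
  -- Step 2: (U - Uhat)ᵀ (U - Uhat) is diagonal
  have hM : (U - Uhat)ᵀ * (U - Uhat) = Matrix.diagonal (fun j => 2 - 2 * φ j) := by
    have hDT : Uhatᵀ * U = Matrix.diagonal φ := by
      have := congrArg Matrix.transpose hD
      rwa [Matrix.transpose_mul, Matrix.transpose_transpose, Matrix.diagonal_transpose] at this
    rw [Matrix.transpose_sub, Matrix.sub_mul, Matrix.mul_sub, Matrix.mul_sub,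
      hU, hUhat, hD, hDT]
    ext i j
    by_cases h : i = j <;> simp [h, Matrix.diagonal_apply, Matrix.one_apply] <;> ring
  -- Step 3: exact value of the norm
  have hjle : ∀ j : Fin r, φ jr ≤ φ j := fun j => hφa (by
    show j ≤ jr
    exact Fin.mk_le_mk.mpr (by omega) |>.trans_eq rfl)
  have hnorm : ‖U - Uhat‖ ^ 2 = 2 * (1 - φ jr) := by
    have hct : (U - Uhat)ᴴ = (U - Uhat)ᵀ :=
      Matrix.conjTranspose_eq_transpose_of_trivial _
    have h1 : ‖(U - Uhat)ᴴ * (U - Uhat)‖ = ‖U - Uhat‖ * ‖U - Uhat‖ :=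
      Matrix.l2_opNorm_conjTranspose_mul_self _
    rw [hct, hM] at h1
    have h2 : ‖(Matrix.diagonal (fun j => 2 - 2 * φ j) : Matrix (Fin r) (Fin r) ℝ)‖
        = 2 - 2 * φ jr := by
      refine aux_diag_norm _ jr (fun j => by have := hφ1 j; linarith)
        (fun j => by have := hjle j; linarith)
    rw [h2] at h1
    rw [sq, ← h1]; ring
  refine ⟨hnorm, ?_⟩
  -- Step 4: lower bound on ‖P - Phat‖
  set u : Fin q → ℝ := fun i => U i jr with hu
  set v : Fin q → ℝ := fun i => Uhat i jr with hv
  have huu : u ⬝ᵥ u = 1 := by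
    have := congrFun (congrFun hU jr) jr
    simpa [Matrix.mul_apply, Matrix.one_apply, dotProduct, hu] using this
  have hvv : v ⬝ᵥ v = 1 := by
    have := congrFun (congrFun hUhat jr) jr
    simpa [Matrix.mul_apply, Matrix.one_apply, dotProduct, hv] using this
  have huv : u ⬝ᵥ v = φ jr := hφdef jr
  have hw : (P - Phat) *ᵥ v = φ jr • u - v := by
    have hUtv : Uᵀ *ᵥ v = φ jr • (Pi.single jr 1 : Fin r → ℝ) := by
      funext j
      have : (Uᵀ *ᵥ v) j = (Uᵀ * Uhat) j jr := by
        simp [Matrix.mulVec, Matrix.mul_apply, dotProduct, hv]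
      rw [this, hD]
      by_cases h : j = jr <;> simp [Matrix.diagonal_apply, h, Pi.single_apply]
    have hUhtv : Uhatᵀ *ᵥ v = (Pi.single jr 1 : Fin r → ℝ) := by
      funext j
      have : (Uhatᵀ *ᵥ v) j = (Uhatᵀ * Uhat) j jr := by
        simp [Matrix.mulVec, Matrix.mul_apply, dotProduct, hv]
      rw [this, hUhat]
      by_cases h : j = jr <;> simp [Matrix.one_apply, h, Pi.single_apply]
    rw [Matrix.sub_mulVec, hP, hPhat, ← Matrix.mulVec_mulVec, ← Matrix.mulVec_mulVec,
      hUtv, hUhtv, Matrix.mulVec_smul, Matrix.mulVec_single, Matrix.mulVec_single]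
    funext i
    simp [hu, hv]
  have hsum : ∑ i, (((P - Phat) *ᵥ v) i) ^ 2 = 1 - φ jr ^ 2 := by
    calc ∑ i, (((P - Phat) *ᵥ v) i) ^ 2
        = ∑ i, (φ jr ^ 2 * (u i * u i) - 2 * φ jr * (u i * v i) + v i * v i) := by
          rw [hw]
          refine Finset.sum_congr rfl fun i _ => ?_
          simp only [Pi.sub_apply, Pi.smul_apply, smul_eq_mul]
          ring
      _ = φ jr ^ 2 * (u ⬝ᵥ u) - 2 * φ jr * (u ⬝ᵥ v) + v ⬝ᵥ v := by
          simp only [dotProduct, Finset.sum_add_distrib, Finset.sum_sub_distrib,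
            Finset.mul_sum]
      _ = 1 - φ jr ^ 2 := by rw [huu, huv, hvv]; ring
  have hvnorm : ∑ j, (v j) ^ 2 = 1 := by
    rw [← huu]
    calc ∑ j, (v j) ^ 2 = ∑ j, v j * v j := Finset.sum_congr rfl fun j _ => sq (v j)
      _ = v ⬝ᵥ v := rfl
      _ = 1 := hvv
      _ = u ⬝ᵥ u := huu.symm
  have hle := aux_le_opNorm (P - Phat) v hvnorm
  rw [hsum] at hle
  -- Step 5: conclude
  have hφr0 := hφ0 jr
  have hφr1 := hφ1 jr
  have hφsq : (0:ℝ) ≤ 1 - φ jr ^ 2 := by nlinarith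
  have hnn : (0:ℝ) ≤ ‖P - Phat‖ := norm_nonneg _
  have h1 : 1 - φ jr ^ 2 ≤ ‖P - Phat‖ ^ 2 := by
    have := Real.sq_sqrt hφsq
    nlinarith [Real.sqrt_nonneg (1 - φ jr ^ 2)]
  have h2 : Real.sqrt (1 - ‖P - Phat‖ ^ 2) ≤ φ jr := by
    calc Real.sqrt (1 - ‖P - Phat‖ ^ 2) ≤ Real.sqrt (φ jr ^ 2) :=
          Real.sqrt_le_sqrt (by linarith)
      _ = φ jr := Real.sqrt_sq hφr0
  rw [hnorm]
  linarith
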